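/- (Discrete exponential-weight lower bound) Let p > 1 and let a = (a_k)_{k≥0} be a sequence of nonnegative reals with Σ_k a_k = h > 1 and (Σ_k a_k^p)^(1/p) ≤ 1. Then there is a constant c = c(p) > 0, independent of a and h, such that (Σ_k a_k^p e^k)^(1/p) ≥ c · e^{h^{p/(p−1)}/p} / h^{1/(p−1)}. -/

import Mathlib

open scoped ENNReal

open MeasureTheory in
lemma my_holder_tsum {p q : ℝ} (hpq : Real.HolderConjugate p q) (f g : ℕ → ℝ≥0∞) :
    ∑' k, f k * g k ≤ (∑' k, f k ^ p) ^ (1/p) * (∑' k, g k ^ q) ^ (1/q) := by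
  have H := ENNReal.lintegral_mul_le_Lp_mul_Lq (Measure.count : Measure ℕ) hpq
    (Measurable.of_discrete (f := f)).aemeasurable
    (Measurable.of_discrete (f := g)).aemeasurable
  simpa [lintegral_count] using H

theorem stmt_4 (p : ℝ) (hp : 1 < p) :
    ∃ c > 0, ∀ (a : ℕ → ℝ) (h : ℝ), (∀ k, 0 ≤ a k) → 1 < h →
      Summable a → (∑' k, a k) = h → (∑' k, a k ^ p) ≤ 1 →
      ENNReal.ofReal (c * Real.exp (h ^ (p / (p - 1)) / p) / h ^ (1 / (p - 1))) ≤
        (∑' k : ℕ, ENNReal.ofReal (a k ^ p * Real.exp k)) ^ (1 / p) := by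
  have hp0 : 0 < p := lt_trans one_pos hp
  have hp1 : 0 < p - 1 := sub_pos.2 hp
  set q : ℝ := p / (p - 1) with hq
  have hpq : p.HolderConjugate q := Real.HolderConjugate.conjExponent hp
  have hq1 : 1 < q := hpq.symm.lt
  have hq0 : 0 < q := lt_trans one_pos hq1
  set r : ℝ := Real.exp (-(1/(p-1))) with hrdef
  have hr0 : 0 < r := Real.exp_pos _
  have hr1 : r < 1 := by
    calc r = Real.exp (-(1/(p-1))) := hrdef
      _ < Real.exp 0 := Real.exp_lt_exp.2 (neg_neg_of_pos (by positivity))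
      _ = 1 := Real.exp_zero
  have h1r : 0 < 1 - r := sub_pos.2 hr1
  refine ⟨Real.exp (-((q+1)/p)) * (1-r)^(1/q), by positivity, ?_⟩
  intro a h ha hh1 hsum hsum_eq hpsum
  set A : ℕ → ℝ≥0∞ := fun k => ENNReal.ofReal (a k) with hA
  set S : ℝ≥0∞ := ∑' k, ENNReal.ofReal (a k ^ p * Real.exp k) with hS
  have hh0 : 0 < h := lt_trans one_pos hh1
  set δ : ℝ := h ^ (1 - q) with hδ
  have hδ0 : 0 < δ := Real.rpow_pos_of_pos hh0 _
  have hδ1 : δ < 1 := Real.rpow_lt_one_of_one_lt_of_neg hh1 (by linarith)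
  have hδh : δ < h := hδ1.trans hh1
  have hhδ0 : 0 < h - δ := sub_pos.2 hδh
  set N : ℕ := ⌊(h - δ) ^ q⌋₊ with hN
  -- F1
  have F1 : (N:ℝ) ^ (1/q) ≤ h - δ := by
    have h1 : (N:ℝ) ≤ (h-δ)^q := Nat.floor_le (by positivity)
    calc (N:ℝ)^(1/q) ≤ ((h-δ)^q)^(1/q) :=
          Real.rpow_le_rpow (Nat.cast_nonneg N) h1 (by positivity)
      _ = h - δ := by
          rw [← Real.rpow_mul hhδ0.le, mul_one_div_cancel hq0.ne', Real.rpow_one]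
  -- F2
  have F2 : h ^ q - (q + 1) ≤ (N:ℝ) := by
    have hs1 : δ / h < 1 := (div_lt_one hh0).2 hδh
    have hs2 : 0 < δ / h := div_pos hδ0 hh0
    have hs : (-1:ℝ) ≤ -(δ/h) := by linarith
    have hb := one_add_mul_self_le_rpow_one_add hs hq1.le
    have key : (1 + -(δ/h))^q * h^q = (h-δ)^q := by
      rw [← Real.mul_rpow (by linarith) hh0.le]
      congr 1
      field_simp
      ring
    have hone : δ * h ^ q = h := by
      rw [hδ, ← Real.rpow_add hh0]
      have e : 1 - q + q = 1 := by ring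
      rw [e, Real.rpow_one]
    have hone' : δ / h * h ^ q = 1 := by
      rw [div_mul_eq_mul_div, hone, div_self hh0.ne']
    have hb' : (1 + q * -(δ/h)) * h^q ≤ (h-δ)^q := by
      calc (1 + q * -(δ/h)) * h^q ≤ (1 + -(δ/h))^q * h^q :=
            mul_le_mul_of_nonneg_right hb (by positivity)
        _ = (h-δ)^q := key
    have hL : (1 + q * -(δ/h)) * h^q = h^q - q := by
      have e : (1 + q * -(δ/h)) * h^q = h^q - q * (δ/h * h^q) := by ring
      rw [e, hone', mul_one]
    have hfl : (h-δ)^q - 1 < (N:ℝ) := Nat.sub_one_lt_floor _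
    rw [hL] at hb'
    linarith
  -- S0
  have S0 : ENNReal.ofReal h = ∑' k, A k := by
    rw [← hsum_eq]
    exact ENNReal.ofReal_tsum_of_nonneg ha hsum
  -- summability of a^p
  have hsump : Summable (fun k => a k ^ p) := by
    have h0 : Filter.Tendsto a Filter.atTop (nhds 0) := hsum.tendsto_atTop_zero
    have hev : ∀ᶠ k in Filter.atTop, a k < 1 := h0.eventually (gt_mem_nhds one_pos)
    obtain ⟨K, hK⟩ := Filter.eventually_atTop.1 hev
    rw [← summable_nat_add_iff K]
    refine Summable.of_nonneg_of_le (fun n => Real.rpow_nonneg (ha _) p) (fun n => ?_)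
      ((summable_nat_add_iff K).2 hsum)
    rcases eq_or_lt_of_le (ha (n+K)) with h0' | h0'
    · rw [← h0', Real.zero_rpow hp0.ne']
    · calc a (n+K) ^ p ≤ a (n+K) ^ (1:ℝ) :=
            Real.rpow_le_rpow_of_exponent_ge h0' (hK _ (Nat.le_add_left K n)).le hp.le
        _ = a (n+K) := Real.rpow_one _
  -- S1
  have S1 : ∑' k, A k ^ p ≤ 1 := by
    have e : ∀ k, A k ^ p = ENNReal.ofReal (a k ^ p) := fun k =>
      ENNReal.ofReal_rpow_of_nonneg (ha k) hp0.le
    rw [tsum_congr e, ← ENNReal.ofReal_tsum_of_nonneg (fun k => Real.rpow_nonneg (ha k) p) hsump]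
    exact ENNReal.ofReal_le_one.2 hpsum
  -- S2 : head Hölder
  have S2 : ∑ k ∈ Finset.range N, A k ≤ (N : ℝ≥0∞) ^ (1/q : ℝ) := by
    set f : ℕ → ℝ≥0∞ := fun k => if k < N then A k else 0 with hf
    set g : ℕ → ℝ≥0∞ := fun k => if k < N then 1 else 0 with hg
    have h1 : ∑' k, f k * g k = ∑ k ∈ Finset.range N, A k := by
      rw [tsum_eq_sum (s := Finset.range N)
        (fun k hk => by simp only [Finset.mem_range] at hk; simp [hf, hg, hk])]
      refine Finset.sum_congr rfl fun k hk => ?_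
      simp [hf, hg, Finset.mem_range.1 hk]
    have h2 : ∑' k, f k ^ p ≤ 1 := by
      refine le_trans (ENNReal.tsum_le_tsum fun k => ?_) S1
      by_cases hk : k < N
      · simp [hf, hk]
      · simp [hf, hk, ENNReal.zero_rpow_of_pos hp0]
    have h3 : ∑' k, g k ^ q = (N : ℝ≥0∞) := by
      have e : ∀ k, g k ^ q = if k < N then 1 else 0 := fun k => by
        by_cases hk : k < N <;> simp [hg, hk, ENNReal.zero_rpow_of_pos hq0]
      rw [tsum_congr e, tsum_eq_sum (s := Finset.range N)
        (fun k hk => by simp only [Finset.mem_range] at hk; simp [hk])]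
      rw [Finset.sum_congr rfl (fun k hk => if_pos (Finset.mem_range.1 hk))]
      simp
    have H := my_holder_tsum hpq f g
    rw [h1, h3] at H
    refine H.trans ?_
    calc (∑' k, f k ^ p) ^ (1/p) * (N:ℝ≥0∞) ^ (1/q)
        ≤ (1:ℝ≥0∞) ^ (1/p) * (N:ℝ≥0∞) ^ (1/q) :=
          mul_le_mul_left (ENNReal.rpow_le_rpow h2 (by positivity)) _
      _ = (N:ℝ≥0∞) ^ (1/q) := by rw [ENNReal.one_rpow, one_mul]
  -- S3 : tail Hölder
  have S3 : ∑' k, A (k + N) ≤ S ^ (1/p : ℝ) * ENNReal.ofReal ((r^N * (1-r)⁻¹) ^ (1/q : ℝ)) := by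
    set f : ℕ → ℝ≥0∞ := fun k => ENNReal.ofReal (a (k+N) * Real.exp (((k+N : ℕ) : ℝ)/p)) with hf
    set g : ℕ → ℝ≥0∞ := fun k => ENNReal.ofReal ((Real.exp (((k+N : ℕ) : ℝ)/p))⁻¹) with hg
    have h1 : ∀ k, f k * g k = A (k + N) := by
      intro k
      rw [hf, hg, hA]
      rw [← ENNReal.ofReal_mul (mul_nonneg (ha _) (Real.exp_pos _).le), mul_assoc,
        mul_inv_cancel₀ (Real.exp_ne_zero _), mul_one]
    have h2 : ∑' k, f k ^ p ≤ S := by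
      have e : ∀ k, f k ^ p = ENNReal.ofReal (a (k+N) ^ p * Real.exp ((k+N : ℕ) : ℝ)) := by
        intro k
        rw [hf, ENNReal.ofReal_rpow_of_nonneg (mul_nonneg (ha _) (Real.exp_pos _).le) hp0.le,
          Real.mul_rpow (ha _) (Real.exp_pos _).le, ← Real.exp_mul,
          div_mul_cancel₀ _ hp0.ne']
      rw [tsum_congr e, hS]
      exact ENNReal.tsum_comp_le_tsum_of_injective (add_left_injective N)
        (fun k => ENNReal.ofReal (a k ^ p * Real.exp k))
    have h3 : ∑' k, g k ^ q = ENNReal.ofReal (r ^ N * (1-r)⁻¹) := by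
      have e : ∀ k, g k ^ q = ENNReal.ofReal r ^ (k + N) := by
        intro k
        rw [hg, ENNReal.ofReal_rpow_of_nonneg (inv_nonneg.2 (Real.exp_pos _).le) hq0.le,
          Real.inv_rpow (Real.exp_pos _).le, ← Real.exp_mul, ← Real.exp_neg,
          ← ENNReal.ofReal_pow hr0.le]
        congr 1
        rw [hrdef, ← Real.exp_nat_mul]
        congr 1
        push_cast
        rw [hq]
        field_simp
      rw [tsum_congr e]
      calc ∑' k, ENNReal.ofReal r ^ (k + N)
          = ∑' k, ENNReal.ofReal r ^ k * ENNReal.ofReal r ^ N :=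
            tsum_congr fun k => pow_add _ _ _
        _ = (1 - ENNReal.ofReal r)⁻¹ * ENNReal.ofReal r ^ N := by
            rw [ENNReal.tsum_mul_right, ENNReal.tsum_geometric]
        _ = ENNReal.ofReal (r ^ N * (1-r)⁻¹) := by
            rw [ENNReal.ofReal_mul (pow_nonneg hr0.le N), ENNReal.ofReal_pow hr0.le,
              ENNReal.ofReal_inv_of_pos h1r, ENNReal.ofReal_sub 1 hr0.le,
              ENNReal.ofReal_one, mul_comm]
    have H := my_holder_tsum hpq f g
    rw [tsum_congr h1, h3] at H
    refine H.trans ?_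
    rw [ENNReal.ofReal_rpow_of_pos (by positivity)]
    exact mul_le_mul_left (ENNReal.rpow_le_rpow h2 (by positivity)) _
  -- combine
  have comb : ENNReal.ofReal δ ≤ S ^ (1/p : ℝ) * ENNReal.ofReal ((r^N * (1-r)⁻¹) ^ (1/q : ℝ)) := by
    have hsplit : (∑ k ∈ Finset.range N, A k) + ∑' k, A (k + N) = ∑' k, A k :=
      Summable.sum_add_tsum_nat_add' (f := A) (k := N) ENNReal.summable
    have hNcast : (N : ℝ≥0∞) ^ (1/q : ℝ) = ENNReal.ofReal ((N:ℝ) ^ (1/q : ℝ)) := by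
      rw [← ENNReal.ofReal_natCast N,
        ENNReal.ofReal_rpow_of_nonneg (Nat.cast_nonneg N) (by positivity)]
    have hmain : ENNReal.ofReal ((N:ℝ) ^ (1/q : ℝ)) + ENNReal.ofReal δ ≤
        ENNReal.ofReal ((N:ℝ) ^ (1/q : ℝ)) +
          S ^ (1/p : ℝ) * ENNReal.ofReal ((r^N * (1-r)⁻¹) ^ (1/q : ℝ)) := by
      calc ENNReal.ofReal ((N:ℝ) ^ (1/q : ℝ)) + ENNReal.ofReal δ
          = ENNReal.ofReal ((N:ℝ) ^ (1/q : ℝ) + δ) :=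
            (ENNReal.ofReal_add (by positivity) hδ0.le).symm
        _ ≤ ENNReal.ofReal h := ENNReal.ofReal_le_ofReal (by linarith)
        _ = ∑' k, A k := S0
        _ = (∑ k ∈ Finset.range N, A k) + ∑' k, A (k + N) := hsplit.symm
        _ ≤ _ := add_le_add (S2.trans_eq hNcast) S3
    exact (ENNReal.add_le_add_iff_left ENNReal.ofReal_ne_top).1 hmain
  have final : ENNReal.ofReal (δ / ((r^N * (1-r)⁻¹) ^ (1/q : ℝ))) ≤ S ^ (1/p : ℝ) := by
    rw [ENNReal.ofReal_div_of_pos (by positivity)]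
    exact ENNReal.div_le_of_le_mul comb
  refine le_trans (ENNReal.ofReal_le_ofReal ?_) final
  -- final real inequality
  have e1 : δ = (h ^ (1/(p-1)))⁻¹ := by
    rw [hδ, ← Real.rpow_neg hh0.le]
    congr 1
    rw [hq]
    field_simp
    ring
  have e2 : (r^N * (1-r)⁻¹) ^ (1/q : ℝ) = Real.exp (-((N:ℝ)/p)) * ((1-r)^(1/q))⁻¹ := by
    rw [Real.mul_rpow (pow_nonneg hr0.le N) (inv_nonneg.2 h1r.le), Real.inv_rpow h1r.le]
    congr 1
    rw [hrdef, ← Real.exp_nat_mul, ← Real.exp_mul]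
    congr 1
    rw [hq]
    field_simp
  have e3 : Real.exp (-((q+1)/p)) * Real.exp (h^q/p) ≤ Real.exp ((N:ℝ)/p) := by
    rw [← Real.exp_add]
    refine Real.exp_le_exp.2 ?_
    have e : -((q+1)/p) + h^q/p = (h^q - (q+1))/p := by ring
    rw [e]
    gcongr
  calc Real.exp (-((q+1)/p)) * (1-r)^(1/q) * Real.exp (h^q/p) / h^(1/(p-1))
      = (Real.exp (-((q+1)/p)) * Real.exp (h^q/p)) * ((1-r)^(1/q) * (h^(1/(p-1)))⁻¹) := by
        rw [div_eq_mul_inv]; ring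
    _ ≤ Real.exp ((N:ℝ)/p) * ((1-r)^(1/q) * (h^(1/(p-1)))⁻¹) :=
        mul_le_mul_of_nonneg_right e3 (by positivity)
    _ = δ / ((r^N * (1-r)⁻¹) ^ (1/q : ℝ)) := by
        rw [e2, e1, Real.exp_neg]
        have h1' : ((1-r):ℝ)^(1/q) ≠ 0 := by positivity
        have h2' : (h:ℝ)^(1/(p-1)) ≠ 0 := by positivity
        have h3' : Real.exp ((N:ℝ)/p) ≠ 0 := (Real.exp_pos _).ne'
        field_simp
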